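/- arXiv:1802.09111 — 8 statements merged into one kernel-verified Lean document; each statement's English description precedes it below -/
import Mathlib

section
/- Let N and K be finite types, let L be a real symmetric positive semidefinite matrix indexed by N ⊕ K with block form L = [[A, C],[Cᵀ, D]] where the N×N block A is positive definite, and let S := D − Cᵀ·A⁻¹·C be the Schur complement of L onto K. Let H be a real symmetric positive semidefinite matrix indexed by K, and let ε ∈ (0,1) be such that for every real vector x indexed by K, (1−ε)·xᵀSx ≤ xᵀHx ≤ (1+ε)·xᵀSx. Then for all s, t ∈ K, for every vector y indexed by N ⊕ K satisfying L·y = χ (where χ is the vector that is +1 at the copy of s in K, −1 at the copy of t in K, and 0 elsewhere), and for every vector z indexed by K satisfying H·z = 1_s − 1_t, one has (1/(1+ε))·(y_s − y_t) ≤ z_s − z_t ≤ (1/(1−ε))·(y_s − y_t), where y_s, y_t denote the entries of y at the copies of s and t in K. In other words, a (1±ε)-approximate Schur complement of L with respect to the terminals K preserves all pairwise effective resistances between terminals up to a factor 1/(1±ε). -/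
open Matrix

private lemma quad_max {K : Type*} [Fintype K] {M : Matrix K K ℝ} (hM : M.PosSemidef)
    (w x : K → ℝ) :
    2 * (x ⬝ᵥ (M *ᵥ w)) - x ⬝ᵥ M *ᵥ x ≤ w ⬝ᵥ M *ᵥ w := by
  have h0 := hM.dotProduct_mulVec_nonneg (x - w)
  have hsym : w ⬝ᵥ (M *ᵥ x) = x ⬝ᵥ (M *ᵥ w) := by
    rw [Matrix.dotProduct_mulVec, ← Matrix.mulVec_transpose]
    have : Mᵀ = M := by
      have := hM.1
      simpa [Matrix.IsHermitian, Matrix.conjTranspose_eq_transpose_of_trivial] using this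
    rw [this, dotProduct_comm]
  simp only [star_trivial] at h0
  rw [Matrix.mulVec_sub, sub_dotProduct, dotProduct_sub,
    dotProduct_sub] at h0
  linarith [h0]

/-- A `(1±ε)`-approximate Schur complement preserves pairwise effective resistances
among terminals up to a factor `1/(1±ε)`. Effective resistances are expressed via
solutions of the corresponding Laplacian systems. -/
theorem approxSchurComplement_resistance_sparsifier
    {N K : Type*} [Fintype N] [Fintype K] [DecidableEq N] [DecidableEq K]
    (A : Matrix N N ℝ) (C : Matrix N K ℝ) (D : Matrix K K ℝ)
    (hL : (Matrix.fromBlocks A C Cᵀ D).PosSemidef)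
    (hA : A.PosDef)
    (H : Matrix K K ℝ) (hH : H.PosSemidef)
    (ε : ℝ) (hε0 : 0 < ε) (hε1 : ε < 1)
    (happrox : ∀ x : K → ℝ,
      (1 - ε) * (x ⬝ᵥ (D - Cᵀ * A⁻¹ * C) *ᵥ x) ≤ x ⬝ᵥ H *ᵥ x ∧
        x ⬝ᵥ H *ᵥ x ≤ (1 + ε) * (x ⬝ᵥ (D - Cᵀ * A⁻¹ * C) *ᵥ x)) :
    ∀ (s t : K) (y : N ⊕ K → ℝ) (z : K → ℝ),
      Matrix.fromBlocks A C Cᵀ D *ᵥ y =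
        (Pi.single (Sum.inr s) 1 - Pi.single (Sum.inr t) 1) →
      H *ᵥ z = (Pi.single s 1 - Pi.single t 1) →
      (1 / (1 + ε)) * (y (Sum.inr s) - y (Sum.inr t)) ≤ z s - z t ∧
        z s - z t ≤ (1 / (1 - ε)) * (y (Sum.inr s) - y (Sum.inr t)) := by
  intro s t y z hy hz
  set S : Matrix K K ℝ := D - Cᵀ * A⁻¹ * C with hSdef
  haveI : Invertible A := hA.isUnit.invertible
  -- S is PSD
  have hCH : Cᴴ = Cᵀ := by ext i j; simp
  have hS : S.PosSemidef := by
    rw [hSdef]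
    rw [← hCH]
    exact (Matrix.PosDef.fromBlocks₁₁ C D hA).mp (by rwa [hCH])
  set χ : K → ℝ := Pi.single s 1 - Pi.single t 1 with hχdef
  set y₁ : N → ℝ := y ∘ Sum.inl with hy1
  set y₂ : K → ℝ := y ∘ Sum.inr with hy2
  have hyelim : y = Sum.elim y₁ y₂ := by
    funext i; cases i <;> rfl
  rw [hyelim, Matrix.fromBlocks_mulVec] at hy
  have h1 : A *ᵥ y₁ + C *ᵥ y₂ = 0 := by
    funext n
    have := congrFun hy (Sum.inl n)
    simpa [Pi.single_apply] using this
  have h2 : Cᵀ *ᵥ y₁ + D *ᵥ y₂ = χ := by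
    funext k
    have := congrFun hy (Sum.inr k)
    simpa [hχdef, Pi.single_apply] using this
  -- y₁ = -(A⁻¹ *ᵥ (C *ᵥ y₂))
  have hy1eq : y₁ = -(A⁻¹ *ᵥ (C *ᵥ y₂)) := by
    have hAy : A *ᵥ y₁ = -(C *ᵥ y₂) := by
      rw [eq_neg_iff_add_eq_zero]; exact h1
    have := congrArg (fun v => A⁻¹ *ᵥ v) hAy
    simpa [Matrix.mulVec_mulVec,
      Matrix.nonsing_inv_mul A ((Matrix.isUnit_iff_isUnit_det A).mp hA.isUnit),
      Matrix.mulVec_neg] using this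
  -- S *ᵥ y₂ = χ
  have hSy : S *ᵥ y₂ = χ := by
    rw [hSdef, Matrix.sub_mulVec]
    have : (Cᵀ * A⁻¹ * C) *ᵥ y₂ = -(Cᵀ *ᵥ y₁) := by
      rw [hy1eq]
      simp [Matrix.mulVec_mulVec, Matrix.mulVec_neg, Matrix.mul_assoc]
    rw [this]
    rw [← h2]; ring_nf
  -- R and Q
  have hR : y₂ ⬝ᵥ χ = y (Sum.inr s) - y (Sum.inr t) := by
    simp [hχdef, dotProduct_sub, dotProduct_single, hy2]
  have hQ : z ⬝ᵥ χ = z s - z t := by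
    simp [hχdef, dotProduct_sub, dotProduct_single]
  set R : ℝ := y₂ ⬝ᵥ χ with hRdef
  set Q : ℝ := z ⬝ᵥ χ with hQdef
  have hRS : y₂ ⬝ᵥ S *ᵥ y₂ = R := by rw [hSy]
  have hQH : z ⬝ᵥ H *ᵥ z = Q := by rw [hz]
  have hχz : H *ᵥ z = χ := hz
  -- bounds
  have hby := happrox y₂
  have hbz := happrox z
  have h1ε : (0:ℝ) < 1 + ε := by linarith
  have h2ε : (0:ℝ) < 1 - ε := by linarith
  -- first inequality: R/(1+ε) ≤ Q
  have key1 := quad_max hH z ((1/(1+ε)) • y₂)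
  rw [hχz] at key1
  have e1 : ((1/(1+ε)) • y₂) ⬝ᵥ χ = (1/(1+ε)) * R := by
    simp [smul_dotProduct, hRdef]
  have e2 : ((1/(1+ε)) • y₂) ⬝ᵥ H *ᵥ ((1/(1+ε)) • y₂)
      = (1/(1+ε))^2 * (y₂ ⬝ᵥ H *ᵥ y₂) := by
    rw [Matrix.mulVec_smul, smul_dotProduct, dotProduct_smul]
    simp only [smul_eq_mul]
    field_simp
  rw [e1, e2, ← hQdef] at key1
  have hyH : y₂ ⬝ᵥ H *ᵥ y₂ ≤ (1+ε) * R := by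
    have := hby.2; rw [hRS] at this; exact this
  -- second inequality
  have key2 := quad_max hS y₂ ((1-ε) • z)
  rw [hSy] at key2
  have e3 : ((1-ε) • z) ⬝ᵥ χ = (1-ε) * Q := by
    simp [smul_dotProduct, hQdef]
  have e4 : ((1-ε) • z) ⬝ᵥ S *ᵥ ((1-ε) • z) = (1-ε)^2 * (z ⬝ᵥ S *ᵥ z) := by
    rw [Matrix.mulVec_smul, smul_dotProduct, dotProduct_smul]
    simp [smul_eq_mul]; ring
  rw [e3, e4, ← hRdef] at key2
  have hzS : (1-ε) * (z ⬝ᵥ S *ᵥ z) ≤ Q := by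
    have := hbz.1; rw [hQH] at this; exact this
  constructor
  · rw [← hR, ← hQ]
    have hinv : (1/(1+ε))^2 * (y₂ ⬝ᵥ H *ᵥ y₂) ≤ (1/(1+ε))^2 * ((1+ε) * R) := by
      apply mul_le_mul_of_nonneg_left hyH (by positivity)
    have heq : (1/(1+ε))^2 * ((1+ε) * R) = (1/(1+ε)) * R := by
      field_simp
    rw [heq] at hinv
    linarith [key1, hinv]
  · rw [← hR, ← hQ]
    have hzS2 : (1-ε)^2 * (z ⬝ᵥ S *ᵥ z) ≤ (1-ε) * Q := by
      have := mul_le_mul_of_nonneg_left hzS (le_of_lt h2ε)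
      calc (1-ε)^2 * (z ⬝ᵥ S *ᵥ z) = (1-ε) * ((1-ε) * (z ⬝ᵥ S *ᵥ z)) := by ring
      _ ≤ (1-ε) * Q := this
    have hQR : (1-ε) * Q ≤ R := by nlinarith [key2, hzS2]
    rw [div_mul_eq_mul_div, le_div_iff₀ h2ε, one_mul, mul_comm]
    exact hQR
end

section
/- Let N₁, N₂ and K be finite types and let M be a real symmetric matrix indexed by (N₁ ⊕ N₂) ⊕ K. Suppose the principal block of M on N₁ is invertible and the principal block of M on N₁ ⊕ N₂ is invertible. Let M₁ denote the Schur complement of M onto N₂ ⊕ K (eliminating N₁); then the principal block of M₁ on N₂ is invertible, and the Schur complement of M₁ onto K (eliminating N₂) equals the Schur complement of M onto K (eliminating N₁ ⊕ N₂ in one step). That is, taking Schur complements with respect to a nested pair of terminal sets K ⊆ K' is the same as taking the Schur complement with respect to K directly. -/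
open Matrix

lemma fromBlocks_sub' {l m n o α : Type*} [Sub α] (A : Matrix n l α) (B : Matrix n m α)
    (C : Matrix o l α) (D : Matrix o m α) (A' : Matrix n l α) (B' : Matrix n m α)
    (C' : Matrix o l α) (D' : Matrix o m α) :
    fromBlocks A B C D - fromBlocks A' B' C' D' =
      fromBlocks (A - A') (B - B') (C - C') (D - D') := by
  ext i j
  rcases i with i | i <;> rcases j with j | j <;> rfl

/-- Quotient (transitivity) property of Schur complements: for a symmetric matrix
`M` on `(N₁ ⊕ N₂) ⊕ K` with blocks `A, B, C₁, E, C₂, D`, if the principal block `A`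
on `N₁` and the principal block `[[A,B],[Bᵀ,E]]` on `N₁ ⊕ N₂` are invertible, then
the `N₂` principal block of the Schur complement `M₁` of `M` onto `N₂ ⊕ K`
(eliminating `N₁`) is invertible, and the Schur complement of `M₁` onto `K`
equals the Schur complement of `M` onto `K` taken in one step. -/
theorem schur_complement_quotient
    {N₁ N₂ K : Type*} [Fintype N₁] [Fintype N₂] [Fintype K]
    [DecidableEq N₁] [DecidableEq N₂] [DecidableEq K]
    (A : Matrix N₁ N₁ ℝ) (B : Matrix N₁ N₂ ℝ) (C₁ : Matrix N₁ K ℝ)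
    (E : Matrix N₂ N₂ ℝ) (C₂ : Matrix N₂ K ℝ) (D : Matrix K K ℝ)
    (hA : A.IsSymm) (hE : E.IsSymm) (hD : D.IsSymm)
    (hAunit : IsUnit A)
    (hPunit : IsUnit (Matrix.fromBlocks A B Bᵀ E)) :
    let M₁ : Matrix (N₂ ⊕ K) (N₂ ⊕ K) ℝ :=
      Matrix.fromBlocks E C₂ C₂ᵀ D -
        (Matrix.fromCols B C₁)ᵀ * A⁻¹ * Matrix.fromCols B C₁
    IsUnit M₁.toBlocks₁₁ ∧
      M₁.toBlocks₂₂ - M₁.toBlocks₂₁ * M₁.toBlocks₁₁⁻¹ * M₁.toBlocks₁₂ =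
        D - (Matrix.fromRows C₁ C₂)ᵀ * (Matrix.fromBlocks A B Bᵀ E)⁻¹ *
          Matrix.fromRows C₁ C₂ := by
  obtain ⟨iA⟩ := hAunit.nonempty_invertible
  obtain ⟨iP⟩ := hPunit.nonempty_invertible
  letI := iA
  letI := iP
  letI iS : Invertible (E - Bᵀ * ⅟A * B) := invertibleOfFromBlocks₁₁Invertible A B Bᵀ E
  have hinvA : (⅟A : Matrix N₁ N₁ ℝ) = A⁻¹ := invOf_eq_nonsing_inv A
  have hSunit : IsUnit (E - Bᵀ * A⁻¹ * B) := by
    rw [← hinvA]; exact isUnit_of_invertible _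
  intro M₁
  have hM₁ : M₁ = fromBlocks (E - Bᵀ * A⁻¹ * B) (C₂ - Bᵀ * A⁻¹ * C₁)
      (C₂ᵀ - C₁ᵀ * A⁻¹ * B) (D - C₁ᵀ * A⁻¹ * C₁) := by
    show fromBlocks E C₂ C₂ᵀ D - (fromCols B C₁)ᵀ * A⁻¹ * fromCols B C₁ = _
    rw [transpose_fromCols, fromRows_mul, fromRows_mul_fromCols, fromBlocks_sub']
  have hb11 : M₁.toBlocks₁₁ = E - Bᵀ * A⁻¹ * B := by rw [hM₁]; rfl
  have hb12 : M₁.toBlocks₁₂ = C₂ - Bᵀ * A⁻¹ * C₁ := by rw [hM₁]; rfl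
  have hb21 : M₁.toBlocks₂₁ = C₂ᵀ - C₁ᵀ * A⁻¹ * B := by rw [hM₁]; rfl
  have hb22 : M₁.toBlocks₂₂ = D - C₁ᵀ * A⁻¹ * C₁ := by rw [hM₁]; rfl
  refine ⟨hb11 ▸ hSunit, ?_⟩
  letI iS' : Invertible (E - Bᵀ * A⁻¹ * B) := hSunit.invertible
  have hinvS : (⅟(E - Bᵀ * ⅟A * B) : Matrix N₂ N₂ ℝ) = (E - Bᵀ * A⁻¹ * B)⁻¹ := by
    rw [invOf_eq_nonsing_inv, hinvA]
  have hinvP : (fromBlocks A B Bᵀ E)⁻¹ =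
      fromBlocks (⅟A + ⅟A * B * ⅟(E - Bᵀ * ⅟A * B) * Bᵀ * ⅟A)
        (-(⅟A * B * ⅟(E - Bᵀ * ⅟A * B))) (-(⅟(E - Bᵀ * ⅟A * B) * Bᵀ * ⅟A))
        (⅟(E - Bᵀ * ⅟A * B)) := by
    rw [← invOf_eq_nonsing_inv]
    exact invOf_fromBlocks₁₁_eq A B Bᵀ E
  rw [hb11, hb12, hb21, hb22, hinvP, hinvS, hinvA, transpose_fromRows,
    fromCols_mul_fromBlocks, fromCols_mul_fromRows]
  simp only [Matrix.mul_sub, Matrix.sub_mul, Matrix.mul_add, Matrix.add_mul,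
    Matrix.mul_neg, Matrix.neg_mul, Matrix.mul_assoc]
  abel
end

section
/- Let N₁, N₂ and K be finite types, and let L be a real symmetric positive semidefinite matrix indexed by N₁ ⊕ N₂ ⊕ K whose principal block on N₁ ⊕ N₂ is positive definite. Let ε ∈ (0,1). Let M' be a real symmetric positive semidefinite matrix indexed by N₂ ⊕ K that is a (1±ε)-spectral approximation of S(L, N₂⊕K), the Schur complement of L onto N₂ ⊕ K (eliminating N₁). Then the principal block of M' on N₂ is positive definite, so the Schur complement S(M', K) of M' onto K is defined; and if M'' is a real symmetric matrix indexed by K that is a (1±ε)-spectral approximation of S(M', K), then M'' is a (1±ε)²-spectral approximation of S(L, K), i.e., for every real vector x indexed by K, (1−ε)²·xᵀS(L,K)x ≤ xᵀM''x ≤ (1+ε)²·xᵀS(L,K)x. -/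
open Matrix

section helpers

variable {m n : Type*} [Fintype m] [Fintype n]

private lemma quad_elim_zero (M : Matrix (m ⊕ n) (m ⊕ n) ℝ) (x : m → ℝ) :
    Sum.elim x 0 ⬝ᵥ M *ᵥ Sum.elim x 0 = x ⬝ᵥ M.toBlocks₁₁ *ᵥ x := by
  nth_rewrite 1 [← Matrix.fromBlocks_toBlocks M]
  rw [Matrix.fromBlocks_mulVec]
  simp [sumElim_dotProduct_sumElim]

omit [Fintype m] [Fintype n] in
private lemma herm_toBlocks₂₁ {M : Matrix (m ⊕ n) (m ⊕ n) ℝ} (h : M.IsHermitian) :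
    M.toBlocks₂₁ = M.toBlocks₁₂ᴴ := by
  ext i j
  have := congrFun (congrFun h.symm (Sum.inr i)) (Sum.inl j)
  simpa [Matrix.toBlocks₂₁, Matrix.toBlocks₁₂, Matrix.conjTranspose_apply] using this

omit [Fintype m] [Fintype n] in
private lemma herm_toBlocks₁₁ {M : Matrix (m ⊕ n) (m ⊕ n) ℝ} (h : M.IsHermitian) :
    M.toBlocks₁₁.IsHermitian := by
  ext i j
  have := congrFun (congrFun h (Sum.inl i)) (Sum.inl j)
  simpa [Matrix.toBlocks₁₁, Matrix.conjTranspose_apply] using this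

private lemma posDef_toBlocks₁₁ {M : Matrix (m ⊕ n) (m ⊕ n) ℝ} (h : M.PosDef) :
    M.toBlocks₁₁.PosDef := by
  refine Matrix.PosDef.of_dotProduct_mulVec_pos (herm_toBlocks₁₁ h.1) (fun v hv => ?_)
  have hv' : (Sum.elim v 0 : m ⊕ n → ℝ) ≠ 0 :=
    fun h0 => hv (funext fun i => congrFun h0 (Sum.inl i))
  have h2 := h.dotProduct_mulVec_pos hv'
  simp only [star_trivial] at h2 ⊢
  rwa [quad_elim_zero] at h2

private lemma schur_quad [DecidableEq m] {M : Matrix (m ⊕ n) (m ⊕ n) ℝ} (hM : M.IsHermitian)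
    (hA : M.toBlocks₁₁.PosDef) (x : m → ℝ) (y : n → ℝ) :
    Sum.elim x y ⬝ᵥ M *ᵥ Sum.elim x y =
      (x + (M.toBlocks₁₁⁻¹ * M.toBlocks₁₂) *ᵥ y) ⬝ᵥ M.toBlocks₁₁ *ᵥ
          (x + (M.toBlocks₁₁⁻¹ * M.toBlocks₁₂) *ᵥ y) +
        y ⬝ᵥ (M.toBlocks₂₂ - M.toBlocks₂₁ * M.toBlocks₁₁⁻¹ * M.toBlocks₁₂) *ᵥ y := by
  haveI : Invertible M.toBlocks₁₁ :=
    Matrix.invertibleOfIsUnitDet _ (isUnit_iff_ne_zero.mpr hA.det_pos.ne')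
  have h21 := herm_toBlocks₂₁ hM
  have key := Matrix.schur_complement_eq₁₁ (A := M.toBlocks₁₁) M.toBlocks₁₂ M.toBlocks₂₂ x y
    (herm_toBlocks₁₁ hM)
  simp only [star_trivial] at key
  nth_rewrite 1 [← Matrix.fromBlocks_toBlocks M]
  rw [h21, Matrix.dotProduct_mulVec, key, ← h21]
  simp [Matrix.dotProduct_mulVec]

private lemma schur_le [DecidableEq m] {M : Matrix (m ⊕ n) (m ⊕ n) ℝ} (hM : M.IsHermitian)
    (hA : M.toBlocks₁₁.PosDef) (x : m → ℝ) (y : n → ℝ) :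
    y ⬝ᵥ (M.toBlocks₂₂ - M.toBlocks₂₁ * M.toBlocks₁₁⁻¹ * M.toBlocks₁₂) *ᵥ y ≤
      Sum.elim x y ⬝ᵥ M *ᵥ Sum.elim x y := by
  rw [schur_quad hM hA x y]
  have h := hA.posSemidef.dotProduct_mulVec_nonneg (x + (M.toBlocks₁₁⁻¹ * M.toBlocks₁₂) *ᵥ y)
  simp only [star_trivial] at h
  linarith

private lemma schur_eq [DecidableEq m] {M : Matrix (m ⊕ n) (m ⊕ n) ℝ} (hM : M.IsHermitian)
    (hA : M.toBlocks₁₁.PosDef) (y : n → ℝ) :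
    ∃ x, Sum.elim x y ⬝ᵥ M *ᵥ Sum.elim x y =
      y ⬝ᵥ (M.toBlocks₂₂ - M.toBlocks₂₁ * M.toBlocks₁₁⁻¹ * M.toBlocks₁₂) *ᵥ y :=
  ⟨-((M.toBlocks₁₁⁻¹ * M.toBlocks₁₂) *ᵥ y), by rw [schur_quad hM hA]; simp⟩

private lemma reindex_quad {a b c : Type*} [Fintype a] [Fintype b] [Fintype c]
    (L : Matrix (a ⊕ (b ⊕ c)) (a ⊕ (b ⊕ c)) ℝ) (z : a → ℝ) (y : b → ℝ) (x : c → ℝ) :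
    Sum.elim (Sum.elim z y) x ⬝ᵥ
        (L.submatrix (Equiv.sumAssoc a b c) (Equiv.sumAssoc a b c)) *ᵥ
          Sum.elim (Sum.elim z y) x =
      Sum.elim z (Sum.elim y x) ⬝ᵥ L *ᵥ Sum.elim z (Sum.elim y x) := by
  have hcomp : (Sum.elim (Sum.elim z y) x) ∘ (Equiv.sumAssoc a b c).symm
      = Sum.elim z (Sum.elim y x) := by
    funext i; rcases i with i | i | i <;> rfl
  rw [Matrix.submatrix_mulVec_equiv, hcomp,
    ← comp_equiv_symm_dotProduct _ _ (Equiv.sumAssoc a b c), hcomp]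

end helpers

/-- Transitivity of approximate Schur complements: if `M'` is a `(1±ε)`-spectral
approximation of the Schur complement `S(L, N₂⊕K)` (eliminating `N₁`), then the
`N₂` principal block of `M'` is positive definite, and any `(1±ε)`-spectral
approximation `M''` of `S(M', K)` is a `(1±ε)²`-spectral approximation of
`S(L, K)` (the Schur complement of `L` onto `K`, eliminating `N₁ ⊕ N₂`). -/
theorem approxSchurComplement_transitive
    {N₁ N₂ K : Type*} [Fintype N₁] [Fintype N₂] [Fintype K]
    [DecidableEq N₁] [DecidableEq N₂] [DecidableEq K]
    (L : Matrix (N₁ ⊕ N₂ ⊕ K) (N₁ ⊕ N₂ ⊕ K) ℝ)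
    (hL : L.PosSemidef)
    (hP : (L.submatrix (Sum.map id Sum.inl) (Sum.map id Sum.inl) :
        Matrix (N₁ ⊕ N₂) (N₁ ⊕ N₂) ℝ).PosDef)
    (ε : ℝ) (hε0 : 0 < ε) (hε1 : ε < 1)
    (M' : Matrix (N₂ ⊕ K) (N₂ ⊕ K) ℝ) (hM' : M'.PosSemidef)
    (happrox1 : ∀ x : N₂ ⊕ K → ℝ,
      (1 - ε) * (x ⬝ᵥ (L.toBlocks₂₂ - L.toBlocks₂₁ * L.toBlocks₁₁⁻¹ * L.toBlocks₁₂) *ᵥ x)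
          ≤ x ⬝ᵥ M' *ᵥ x ∧
        x ⬝ᵥ M' *ᵥ x ≤
          (1 + ε) * (x ⬝ᵥ (L.toBlocks₂₂ - L.toBlocks₂₁ * L.toBlocks₁₁⁻¹ * L.toBlocks₁₂) *ᵥ x)) :
    M'.toBlocks₁₁.PosDef ∧
      ∀ M'' : Matrix K K ℝ, M''.IsSymm →
        (∀ x : K → ℝ,
          (1 - ε) *
              (x ⬝ᵥ (M'.toBlocks₂₂ - M'.toBlocks₂₁ * M'.toBlocks₁₁⁻¹ * M'.toBlocks₁₂) *ᵥ x)
              ≤ x ⬝ᵥ M'' *ᵥ x ∧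
            x ⬝ᵥ M'' *ᵥ x ≤
              (1 + ε) *
                (x ⬝ᵥ (M'.toBlocks₂₂ - M'.toBlocks₂₁ * M'.toBlocks₁₁⁻¹ * M'.toBlocks₁₂) *ᵥ x)) →
        ∀ x : K → ℝ,
          (1 - ε) ^ 2 *
              (x ⬝ᵥ (L.submatrix (Sum.inr ∘ Sum.inr) (Sum.inr ∘ Sum.inr) -
                (L.submatrix (Sum.map id Sum.inl) (Sum.inr ∘ Sum.inr))ᵀ *
                  (L.submatrix (Sum.map id Sum.inl) (Sum.map id Sum.inl))⁻¹ *
                  L.submatrix (Sum.map id Sum.inl) (Sum.inr ∘ Sum.inr)) *ᵥ x)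
              ≤ x ⬝ᵥ M'' *ᵥ x ∧
            x ⬝ᵥ M'' *ᵥ x ≤
              (1 + ε) ^ 2 *
                (x ⬝ᵥ (L.submatrix (Sum.inr ∘ Sum.inr) (Sum.inr ∘ Sum.inr) -
                  (L.submatrix (Sum.map id Sum.inl) (Sum.inr ∘ Sum.inr))ᵀ *
                    (L.submatrix (Sum.map id Sum.inl) (Sum.map id Sum.inl))⁻¹ *
                    L.submatrix (Sum.map id Sum.inl) (Sum.inr ∘ Sum.inr)) *ᵥ x) := by
  have hLh : L.IsHermitian := hL.1
  set e := Equiv.sumAssoc N₁ N₂ K with he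
  set L' := L.submatrix e e with hL'def
  have hL'h : L'.IsHermitian := (Matrix.isHermitian_submatrix_equiv e).mpr hLh
  have hB11 : L'.toBlocks₁₁ = L.submatrix (Sum.map id Sum.inl) (Sum.map id Sum.inl) := by
    ext i j; rcases i with i | i <;> rcases j with j | j <;> rfl
  have hB12 : L'.toBlocks₁₂ = L.submatrix (Sum.map id Sum.inl) (Sum.inr ∘ Sum.inr) := by
    ext i j; rcases i with i | i <;> rfl
  have hB22 : L'.toBlocks₂₂ = L.submatrix (Sum.inr ∘ Sum.inr) (Sum.inr ∘ Sum.inr) := by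
    ext i j; rfl
  have hB21 : L'.toBlocks₂₁ = (L.submatrix (Sum.map id Sum.inl) (Sum.inr ∘ Sum.inr))ᵀ := by
    rw [herm_toBlocks₂₁ hL'h, hB12]
    ext i j
    simp [Matrix.conjTranspose_apply]
  have hP' : L'.toBlocks₁₁.PosDef := by rwa [hB11]
  have hA : L.toBlocks₁₁.PosDef := by
    have h := posDef_toBlocks₁₁ hP'
    have heq : L'.toBlocks₁₁.toBlocks₁₁ = L.toBlocks₁₁ := by ext i j; rfl
    rwa [heq] at h
  set S1 := L.toBlocks₂₂ - L.toBlocks₂₁ * L.toBlocks₁₁⁻¹ * L.toBlocks₁₂ with hS1def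
  -- positivity of the N₂ principal block of S1
  have hS1blk : ∀ v : N₂ → ℝ, v ≠ 0 → 0 < v ⬝ᵥ S1.toBlocks₁₁ *ᵥ v := by
    intro v hv
    rw [← quad_elim_zero S1 v]
    obtain ⟨z, hz⟩ := schur_eq hLh hA (Sum.elim v 0)
    rw [← hz, ← reindex_quad L z v 0, ← hL'def, quad_elim_zero L' (Sum.elim z v)]
    have hzv : (Sum.elim z v : N₁ ⊕ N₂ → ℝ) ≠ 0 :=
      fun h0 => hv (funext fun i => congrFun h0 (Sum.inr i))
    have := hP'.dotProduct_mulVec_pos hzv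
    simpa using this
  have hM1 : M'.toBlocks₁₁.PosDef := by
    refine Matrix.PosDef.of_dotProduct_mulVec_pos (herm_toBlocks₁₁ hM'.1) (fun v hv => ?_)
    have h1 := (happrox1 (Sum.elim v 0)).1
    rw [quad_elim_zero S1 v, quad_elim_zero M' v] at h1
    have h2 := hS1blk v hv
    simp only [star_trivial]
    nlinarith
  refine ⟨hM1, fun M'' hsym happrox2 x => ?_⟩
  set SM := M'.toBlocks₂₂ - M'.toBlocks₂₁ * M'.toBlocks₁₁⁻¹ * M'.toBlocks₁₂ with hSMdef
  set S2 := L.submatrix (Sum.inr ∘ Sum.inr) (Sum.inr ∘ Sum.inr) -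
      (L.submatrix (Sum.map id Sum.inl) (Sum.inr ∘ Sum.inr))ᵀ *
        (L.submatrix (Sum.map id Sum.inl) (Sum.map id Sum.inl))⁻¹ *
        L.submatrix (Sum.map id Sum.inl) (Sum.inr ∘ Sum.inr) with hS2def
  have hS2eq : L'.toBlocks₂₂ - L'.toBlocks₂₁ * L'.toBlocks₁₁⁻¹ * L'.toBlocks₁₂ = S2 := by
    rw [hS2def, hB22, hB21, hB12, hB11]
  -- bridge 1 : S2 quadratic is below S1 quadratic on any extension
  have B1 : ∀ y : N₂ → ℝ, x ⬝ᵥ S2 *ᵥ x ≤ Sum.elim y x ⬝ᵥ S1 *ᵥ Sum.elim y x := by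
    intro y
    obtain ⟨z, hz⟩ := schur_eq hLh hA (Sum.elim y x)
    calc x ⬝ᵥ S2 *ᵥ x
        = x ⬝ᵥ (L'.toBlocks₂₂ - L'.toBlocks₂₁ * L'.toBlocks₁₁⁻¹ * L'.toBlocks₁₂) *ᵥ x := by
          rw [hS2eq]
      _ ≤ Sum.elim (Sum.elim z y) x ⬝ᵥ L' *ᵥ Sum.elim (Sum.elim z y) x :=
          schur_le hL'h hP' _ x
      _ = Sum.elim z (Sum.elim y x) ⬝ᵥ L *ᵥ Sum.elim z (Sum.elim y x) := by
          rw [hL'def]; exact reindex_quad L z y x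
      _ = Sum.elim y x ⬝ᵥ S1 *ᵥ Sum.elim y x := hz
  -- bridge 2 : some extension achieves at most S2 quadratic
  have B2 : ∃ y : N₂ → ℝ, Sum.elim y x ⬝ᵥ S1 *ᵥ Sum.elim y x ≤ x ⬝ᵥ S2 *ᵥ x := by
    obtain ⟨w, hw⟩ := schur_eq hL'h hP' x
    refine ⟨w ∘ Sum.inr, ?_⟩
    have hw' : Sum.elim (w ∘ Sum.inl) (w ∘ Sum.inr) = w := Sum.elim_comp_inl_inr w
    calc Sum.elim (w ∘ Sum.inr) x ⬝ᵥ S1 *ᵥ Sum.elim (w ∘ Sum.inr) x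
        ≤ Sum.elim (w ∘ Sum.inl) (Sum.elim (w ∘ Sum.inr) x) ⬝ᵥ L *ᵥ
            Sum.elim (w ∘ Sum.inl) (Sum.elim (w ∘ Sum.inr) x) := schur_le hLh hA _ _
      _ = Sum.elim (Sum.elim (w ∘ Sum.inl) (w ∘ Sum.inr)) x ⬝ᵥ L' *ᵥ
            Sum.elim (Sum.elim (w ∘ Sum.inl) (w ∘ Sum.inr)) x := by
          rw [hL'def]; exact (reindex_quad L _ _ _).symm
      _ = Sum.elim w x ⬝ᵥ L' *ᵥ Sum.elim w x := by rw [hw']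
      _ = x ⬝ᵥ (L'.toBlocks₂₂ - L'.toBlocks₂₁ * L'.toBlocks₁₁⁻¹ * L'.toBlocks₁₂) *ᵥ x := hw
      _ = x ⬝ᵥ S2 *ᵥ x := by rw [hS2eq]
  obtain ⟨y₁, hy₁⟩ := B2
  obtain ⟨y₀, hy₀⟩ := schur_eq hM'.1 hM1 x
  have lb := (happrox2 x).1
  have ub := (happrox2 x).2
  have h1 := (happrox1 (Sum.elim y₀ x)).1
  rw [hy₀] at h1
  have h2 := (happrox1 (Sum.elim y₁ x)).2
  have h3 := schur_le hM'.1 hM1 y₁ x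
  have hB1y₀ := B1 y₀
  have e1 : (0:ℝ) < 1 - ε := by linarith
  have e2 : (0:ℝ) < 1 + ε := by linarith
  constructor
  · nlinarith [lb, h1, hB1y₀, mul_le_mul_of_nonneg_left hB1y₀ e1.le,
      mul_le_mul_of_nonneg_left (mul_le_mul_of_nonneg_left hB1y₀ e1.le) e1.le,
      mul_le_mul_of_nonneg_left h1 e1.le]
  · nlinarith [ub, mul_le_mul_of_nonneg_left h3 e2.le,
      mul_le_mul_of_nonneg_left h2 e2.le,
      mul_le_mul_of_nonneg_left (mul_le_mul_of_nonneg_left hy₁ e2.le) e2.le]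
end

section
/- Let N₁, N₂ and K be finite types. For i = 1, 2, let Mᵢ be a real symmetric matrix indexed by Nᵢ ⊕ K with block form Mᵢ = [[Aᵢ, Cᵢ],[Cᵢᵀ, Dᵢ]], where Aᵢ is invertible. Let M be the real symmetric matrix indexed by (N₁ ⊕ N₂) ⊕ K whose block on N₁ ⊕ N₂ is the block-diagonal matrix diag(A₁, A₂), whose (N₁ ⊕ N₂)×K block stacks C₁ on top of C₂, and whose K×K block is D₁ + D₂. Then the Schur complement of M onto K equals the sum of the Schur complements of M₁ and M₂ onto K: S(M, K) = S(M₁, K) + S(M₂, K) = (D₁ + D₂) − C₁ᵀ·A₁⁻¹·C₁ − C₂ᵀ·A₂⁻¹·C₂. -/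
open Matrix

/-- Composability of Schur complements: if the merged matrix `M` on `(N₁ ⊕ N₂) ⊕ K`
has block-diagonal non-terminal block `diag(A₁, A₂)`, stacked off-diagonal block
`[C₁; C₂]`, and terminal block `D₁ + D₂`, then its Schur complement onto `K` is the
sum of the Schur complements of `M₁ = [[A₁,C₁],[C₁ᵀ,D₁]]` and `M₂ = [[A₂,C₂],[C₂ᵀ,D₂]]`. -/
theorem schur_complement_composable
    {N₁ N₂ K : Type*} [Fintype N₁] [Fintype N₂] [Fintype K]
    [DecidableEq N₁] [DecidableEq N₂] [DecidableEq K]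
    (A₁ : Matrix N₁ N₁ ℝ) (C₁ : Matrix N₁ K ℝ) (D₁ : Matrix K K ℝ)
    (A₂ : Matrix N₂ N₂ ℝ) (C₂ : Matrix N₂ K ℝ) (D₂ : Matrix K K ℝ)
    (hM₁ : (Matrix.fromBlocks A₁ C₁ C₁ᵀ D₁).IsSymm)
    (hM₂ : (Matrix.fromBlocks A₂ C₂ C₂ᵀ D₂).IsSymm)
    (hA₁ : IsUnit A₁) (hA₂ : IsUnit A₂) :
    (D₁ + D₂) -
        (Matrix.fromRows C₁ C₂)ᵀ * (Matrix.fromBlocks A₁ 0 0 A₂)⁻¹ *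
          Matrix.fromRows C₁ C₂ =
      (D₁ - C₁ᵀ * A₁⁻¹ * C₁) + (D₂ - C₂ᵀ * A₂⁻¹ * C₂) := by
  rw [inv_fromBlocks_zero₂₁_of_isUnit_iff A₁ 0 A₂ (by simp [hA₁, hA₂]),
    transpose_fromRows,
    fromCols_mul_fromBlocks, fromCols_mul_fromRows]
  simp only [Matrix.mul_zero, neg_zero, Matrix.zero_mul, zero_add, add_zero, Matrix.mul_assoc]
  abel
end

section
/- Let N₁, N₂ and K be finite types, and let ε ∈ (0,1). For i = 1, 2, let Mᵢ be a real symmetric matrix indexed by Nᵢ ⊕ K with block form Mᵢ = [[Aᵢ, Cᵢ],[Cᵢᵀ, Dᵢ]], where Aᵢ is invertible, and let Hᵢ be a real symmetric matrix indexed by K that is a (1±ε)-spectral approximation of the Schur complement S(Mᵢ, K). Let M be the real symmetric matrix indexed by (N₁ ⊕ N₂) ⊕ K whose block on N₁ ⊕ N₂ is diag(A₁, A₂), whose (N₁ ⊕ N₂)×K block stacks C₁ on top of C₂, and whose K×K block is D₁ + D₂. Then H₁ + H₂ is a (1±ε)-spectral approximation of the Schur complement S(M, K). -/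
open Matrix

/-- Composability of approximate Schur complements: if `Hᵢ` is a `(1±ε)`-spectral
approximation of the Schur complement of `Mᵢ = [[Aᵢ,Cᵢ],[Cᵢᵀ,Dᵢ]]` onto `K`, for
`i = 1, 2`, then `H₁ + H₂` is a `(1±ε)`-spectral approximation of the Schur
complement onto `K` of the merged matrix `M` with blocks `diag(A₁,A₂)`, `[C₁; C₂]`,
and `D₁ + D₂`. -/
theorem approxSchurComplement_composable
    {N₁ N₂ K : Type*} [Fintype N₁] [Fintype N₂] [Fintype K]
    [DecidableEq N₁] [DecidableEq N₂] [DecidableEq K]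
    (ε : ℝ) (hε0 : 0 < ε) (hε1 : ε < 1)
    (A₁ : Matrix N₁ N₁ ℝ) (C₁ : Matrix N₁ K ℝ) (D₁ : Matrix K K ℝ)
    (A₂ : Matrix N₂ N₂ ℝ) (C₂ : Matrix N₂ K ℝ) (D₂ : Matrix K K ℝ)
    (hM₁ : (Matrix.fromBlocks A₁ C₁ C₁ᵀ D₁).IsSymm)
    (hM₂ : (Matrix.fromBlocks A₂ C₂ C₂ᵀ D₂).IsSymm)
    (hA₁ : IsUnit A₁) (hA₂ : IsUnit A₂)
    (H₁ H₂ : Matrix K K ℝ) (hH₁ : H₁.IsSymm) (hH₂ : H₂.IsSymm)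
    (happrox₁ : ∀ x : K → ℝ,
      (1 - ε) * (x ⬝ᵥ (D₁ - C₁ᵀ * A₁⁻¹ * C₁) *ᵥ x) ≤ x ⬝ᵥ H₁ *ᵥ x ∧
        x ⬝ᵥ H₁ *ᵥ x ≤ (1 + ε) * (x ⬝ᵥ (D₁ - C₁ᵀ * A₁⁻¹ * C₁) *ᵥ x))
    (happrox₂ : ∀ x : K → ℝ,
      (1 - ε) * (x ⬝ᵥ (D₂ - C₂ᵀ * A₂⁻¹ * C₂) *ᵥ x) ≤ x ⬝ᵥ H₂ *ᵥ x ∧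
        x ⬝ᵥ H₂ *ᵥ x ≤ (1 + ε) * (x ⬝ᵥ (D₂ - C₂ᵀ * A₂⁻¹ * C₂) *ᵥ x)) :
    ∀ x : K → ℝ,
      (1 - ε) * (x ⬝ᵥ ((D₁ + D₂) -
          (Matrix.fromRows C₁ C₂)ᵀ * (Matrix.fromBlocks A₁ 0 0 A₂)⁻¹ *
            Matrix.fromRows C₁ C₂) *ᵥ x)
          ≤ x ⬝ᵥ (H₁ + H₂) *ᵥ x ∧
        x ⬝ᵥ (H₁ + H₂) *ᵥ x ≤
          (1 + ε) * (x ⬝ᵥ ((D₁ + D₂) -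
            (Matrix.fromRows C₁ C₂)ᵀ * (Matrix.fromBlocks A₁ 0 0 A₂)⁻¹ *
              Matrix.fromRows C₁ C₂) *ᵥ x) := by
  have hinv : (Matrix.fromBlocks A₁ (0 : Matrix N₁ N₂ ℝ) 0 A₂)⁻¹ =
      Matrix.fromBlocks A₁⁻¹ 0 0 A₂⁻¹ := by
    rw [inv_fromBlocks_zero₂₁_of_isUnit_iff _ _ _ (iff_of_true hA₁ hA₂)]
    simp
  have hkey : ((D₁ + D₂) -
      (Matrix.fromRows C₁ C₂)ᵀ * (Matrix.fromBlocks A₁ 0 0 A₂)⁻¹ *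
        Matrix.fromRows C₁ C₂) =
      (D₁ - C₁ᵀ * A₁⁻¹ * C₁) + (D₂ - C₂ᵀ * A₂⁻¹ * C₂) := by
    rw [hinv, transpose_fromRows, fromCols_mul_fromBlocks, fromCols_mul_fromRows]
    simp [Matrix.mul_assoc]
    abel
  intro x
  rw [hkey]
  have h1 := happrox₁ x
  have h2 := happrox₂ x
  simp only [Matrix.add_mulVec, dotProduct_add] at *
  constructor <;> nlinarith [h1.1, h1.2, h2.1, h2.2]
end

section
/- Let W be a finite type, let t ∈ W, and let B be a real symmetric invertible matrix indexed by W. Let v := B·𝟙, where 𝟙 is the all-ones vector indexed by W, and let σ := Σ_{u ∈ W} v_u. Let L be the real symmetric matrix indexed by W ⊕ Unit given in block form by L = [[B, −v],[−vᵀ, σ]], and write s for the vertex in the Unit summand. Then for every vector y indexed by W ⊕ Unit satisfying L·y = 1_s − 1_t (the vector that is +1 at s, −1 at t, and 0 elsewhere), one has y_s − y_t = (B⁻¹)_{t,t}. In particular, the s–t effective resistance of the weighted graph whose Laplacian is L equals the (t,t)-entry of B⁻¹. -/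
open Matrix

/-- The `s–t` effective resistance equals a diagonal entry of an inverse: for a
symmetric invertible `B` indexed by `W`, `v = B·𝟙`, `σ = Σ_u v_u`, and the
Laplacian-type matrix `L = [[B, −v],[−vᵀ, σ]]` on `W ⊕ Unit` (with `s` the extra
vertex), every solution `y` of `L·y = 1_s − 1_t` satisfies `y_s − y_t = (B⁻¹)_{t,t}`. -/
theorem effectiveResistance_eq_inverse_diagonal_entry
    {W : Type*} [Fintype W] [DecidableEq W] (t : W)
    (B : Matrix W W ℝ) (hB : B.IsSymm) (hBu : IsUnit B) :
    ∀ y : W ⊕ Unit → ℝ,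
      Matrix.fromBlocks B
          (Matrix.of fun w (_ : Unit) => -((B *ᵥ fun _ => 1) w))
          (Matrix.of fun (_ : Unit) w => -((B *ᵥ fun _ => 1) w))
          (Matrix.of fun (_ : Unit) (_ : Unit) => ∑ u, (B *ᵥ fun _ => 1) u) *ᵥ y =
        (Pi.single (Sum.inr ()) 1 - Pi.single (Sum.inl t) 1) →
      y (Sum.inr ()) - y (Sum.inl t) = B⁻¹ t t := by
  intro y hy
  set c := y (Sum.inr ()) with hc
  have hz : B *ᵥ (fun u => y (Sum.inl u) - c) = -(Pi.single t 1) := by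
    funext w
    have h1 := congrFun hy (Sum.inl w)
    simp only [Matrix.mulVec, dotProduct, Fintype.sum_sum_type,
      Matrix.fromBlocks_apply₁₁, Matrix.fromBlocks_apply₁₂, Matrix.of_apply,
      Finset.univ_unique, Finset.sum_singleton, Pi.sub_apply] at h1
    have h2 : (Pi.single (Sum.inr ()) 1 : W ⊕ Unit → ℝ) (Sum.inl w) = 0 := by simp
    have h3 : (Pi.single (Sum.inl t) 1 : W ⊕ Unit → ℝ) (Sum.inl w)
        = (Pi.single t 1 : W → ℝ) w := by
      by_cases h : w = t <;> simp [h, Pi.single_apply]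
    rw [h2, h3] at h1
    simp only [Matrix.mulVec, dotProduct, mul_sub, Finset.sum_sub_distrib,
      Pi.neg_apply]
    have : ∑ x, B w x * y (Sum.inl x) + -(∑ u, B w u * (1:ℝ)) * c
        = 0 - (Pi.single t 1 : W → ℝ) w := h1
    have hsum : ∑ x, B w x * c = (∑ u, B w u * (1:ℝ)) * c := by
      rw [Finset.sum_mul]; simp
    rw [hsum]
    linarith [this]
  have hzz : (fun u => y (Sum.inl u) - c) = B⁻¹ *ᵥ (-(Pi.single t 1)) := by
    rw [← hz, Matrix.mulVec_mulVec, Matrix.nonsing_inv_mul B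
      ((Matrix.isUnit_iff_isUnit_det B).mp hBu), Matrix.one_mulVec]
  have := congrFun hzz t
  have hev : (B⁻¹ *ᵥ (-(Pi.single t 1) : W → ℝ)) t = -(B⁻¹ t t) := by
    rw [Matrix.mulVec_neg]
    simp [Matrix.mulVec_single]
  rw [hev] at this
  linarith
end

section
/- Let G be a triangle-free simple graph on a finite vertex type (i.e., there are no three pairwise adjacent vertices), let A be its adjacency matrix over the natural numbers, and let t be a vertex. If G contains no cycle of length 5 through t, i.e., there are no pairwise distinct vertices x₁, x₂, x₃, x₄, all distinct from t, with t adjacent to x₁, x₁ adjacent to x₂, x₂ adjacent to x₃, x₃ adjacent to x₄, and x₄ adjacent to t, then (A⁵)_{t,t} = 0. Equivalently, in a triangle-free graph every closed walk of length 5 based at t is a 5-cycle through t. -/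
open Matrix

/-- In a triangle-free simple graph, if there is no cycle of length 5 through `t`,
then `(A⁵)_{t,t} = 0` for the adjacency matrix `A` over `ℕ`. -/
theorem adjMatrix_pow_five_diag_eq_zero_of_no_five_cycle
    {V : Type*} [Fintype V] [DecidableEq V]
    (G : SimpleGraph V) [DecidableRel G.Adj]
    (htf : ¬∃ a b c : V, G.Adj a b ∧ G.Adj b c ∧ G.Adj a c)
    (t : V)
    (hno5 : ¬∃ x₁ x₂ x₃ x₄ : V,
      [t, x₁, x₂, x₃, x₄].Pairwise (· ≠ ·) ∧
        G.Adj t x₁ ∧ G.Adj x₁ x₂ ∧ G.Adj x₂ x₃ ∧ G.Adj x₃ x₄ ∧ G.Adj x₄ t) :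
    (G.adjMatrix ℕ ^ 5) t t = 0 := by
  have key : ∀ a b c d : V, G.Adj t a → G.Adj a b → G.Adj b c → G.Adj c d →
      G.Adj d t → False := by
    intro a b c d h1 h2 h3 h4 h5
    apply hno5
    refine ⟨a, b, c, d, ?_, h1, h2, h3, h4, h5⟩
    have tb : t ≠ b := by rintro rfl; exact htf ⟨t, c, d, h3, h4, h5.symm⟩
    have tc : t ≠ c := by rintro rfl; exact htf ⟨t, a, b, h1, h2, h3.symm⟩
    have ac : a ≠ c := by rintro rfl; exact htf ⟨t, a, d, h1, h4, h5.symm⟩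
    have ad : a ≠ d := by rintro rfl; exact htf ⟨a, b, c, h2, h3, h4.symm⟩
    have bd : b ≠ d := by rintro rfl; exact htf ⟨t, a, b, h1, h2, h5.symm⟩
    simp [List.pairwise_cons, h1.ne, h2.ne, h3.ne, h4.ne, h5.ne', tb, tc, ac, ad, bd]
  show (G.adjMatrix ℕ ^ 5) t t = 0
  rw [show (5 : ℕ) = 4 + 1 from rfl, pow_succ,
    show (4 : ℕ) = 3 + 1 from rfl, pow_succ,
    show (3 : ℕ) = 2 + 1 from rfl, pow_succ,
    show (2 : ℕ) = 1 + 1 from rfl, pow_succ, pow_one]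
  simp only [Matrix.mul_apply, Finset.sum_mul]
  refine Finset.sum_eq_zero fun a _ => ?_
  refine Finset.sum_eq_zero fun b _ => ?_
  refine Finset.sum_eq_zero fun c _ => ?_
  refine Finset.sum_eq_zero fun d _ => ?_
  by_contra h
  simp only [SimpleGraph.adjMatrix_apply, mul_eq_zero, ite_eq_right_iff, one_ne_zero,
    imp_false, not_or, not_not] at h
  obtain ⟨⟨⟨⟨h1, h2⟩, h3⟩, h4⟩, h5⟩ := h
  exact key d c b a h1 h2 h3 h4 h5
end

section
/- Let L_G and L_H be real symmetric positive semidefinite matrices indexed by a finite type V, and let ε ∈ (0,1) be such that for every real vector x, (1−ε)·xᵀL_G x ≤ xᵀL_H x ≤ (1+ε)·xᵀL_G x. Then for all s, t ∈ V and all vectors y, z with L_G·y = 1_s − 1_t and L_H·z = 1_s − 1_t, one has (1/(1+ε))·(y_s − y_t) ≤ z_s − z_t ≤ (1/(1−ε))·(y_s − y_t). In other words, every (1±ε)-spectral sparsifier of a graph is a 1/(1±ε)-resistance sparsifier: it preserves all pairwise effective resistances up to a factor 1/(1±ε). -/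
open Matrix

/-- Variational characterization: if `A` is PSD symmetric and `A *ᵥ w = χ`, then for all `x`,
`2⟨x,χ⟩ − xᵀAx ≤ ⟨w,χ⟩`. -/
lemma key_var {V : Type*} [Fintype V] (A : Matrix V V ℝ) (hA : A.PosSemidef)
    (w χ : V → ℝ) (hw : A *ᵥ w = χ) (x : V → ℝ) :
    2 * (x ⬝ᵥ χ) - x ⬝ᵥ A *ᵥ x ≤ w ⬝ᵥ χ := by
  have h0 : 0 ≤ (w - x) ⬝ᵥ A *ᵥ (w - x) := by simpa using hA.dotProduct_mulVec_nonneg (w - x)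
  have hAT : Aᵀ = A := by exact (by simpa using hA.1 : A.IsSymm).eq
  have hsym : ∀ u v : V → ℝ, u ⬝ᵥ A *ᵥ v = (A *ᵥ u) ⬝ᵥ v := by
    intro u v
    rw [Matrix.dotProduct_mulVec, ← Matrix.mulVec_transpose, hAT]
  have hwx : x ⬝ᵥ A *ᵥ w = x ⬝ᵥ χ := by rw [hw]
  have hxw : w ⬝ᵥ A *ᵥ x = x ⬝ᵥ χ := by
    rw [hsym, hw, dotProduct_comm]
  have hww : w ⬝ᵥ A *ᵥ w = w ⬝ᵥ χ := by rw [hw]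
  have hexp : (w - x) ⬝ᵥ A *ᵥ (w - x)
      = w ⬝ᵥ χ - 2 * (x ⬝ᵥ χ) + x ⬝ᵥ A *ᵥ x := by
    rw [Matrix.mulVec_sub, sub_dotProduct, dotProduct_sub, dotProduct_sub,
      hwx, hxw, hww]
    ring
  rw [hexp] at h0
  linarith

/-- Every `(1±ε)`-spectral sparsifier is a `1/(1±ε)`-resistance sparsifier: if
`(1−ε)·xᵀL_G x ≤ xᵀL_H x ≤ (1+ε)·xᵀL_G x` for all `x`, then for all `s, t` and all
solutions `y, z` of `L_G·y = 1_s − 1_t` and `L_H·z = 1_s − 1_t`, we have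
`(1/(1+ε))·(y_s − y_t) ≤ z_s − z_t ≤ (1/(1−ε))·(y_s − y_t)`. -/
theorem spectral_sparsifier_is_resistance_sparsifier
    {V : Type*} [Fintype V] [DecidableEq V]
    (LG LH : Matrix V V ℝ) (hLG : LG.PosSemidef) (hLH : LH.PosSemidef)
    (ε : ℝ) (hε0 : 0 < ε) (hε1 : ε < 1)
    (happrox : ∀ x : V → ℝ,
      (1 - ε) * (x ⬝ᵥ LG *ᵥ x) ≤ x ⬝ᵥ LH *ᵥ x ∧
        x ⬝ᵥ LH *ᵥ x ≤ (1 + ε) * (x ⬝ᵥ LG *ᵥ x)) :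
    ∀ (s t : V) (y z : V → ℝ),
      LG *ᵥ y = (Pi.single s 1 - Pi.single t 1) →
      LH *ᵥ z = (Pi.single s 1 - Pi.single t 1) →
      (1 / (1 + ε)) * (y s - y t) ≤ z s - z t ∧
        z s - z t ≤ (1 / (1 - ε)) * (y s - y t) := by
  intro s t y z hy hz
  set χ : V → ℝ := Pi.single s 1 - Pi.single t 1 with hχ
  have hdot : ∀ v : V → ℝ, v ⬝ᵥ χ = v s - v t := by
    intro v
    simp [hχ, dotProduct_sub]
  have hyy : y ⬝ᵥ LG *ᵥ y = y ⬝ᵥ χ := by rw [hy]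
  have hzz : z ⬝ᵥ LH *ᵥ z = z ⬝ᵥ χ := by rw [hz]
  have hε1' : (0:ℝ) < 1 - ε := by linarith
  have hε1'' : (0:ℝ) < 1 + ε := by linarith
  -- lower bound: take x = (1/(1+ε)) • y in the variational lemma for LH
  have h1 : z ⬝ᵥ χ ≥ (1 / (1 + ε)) * (y ⬝ᵥ χ) := by
    set c : ℝ := 1 / (1 + ε) with hc
    have hk := key_var LH hLH z χ hz (c • y)
    have h1 : (c • y) ⬝ᵥ χ = c * (y ⬝ᵥ χ) := by simp [smul_dotProduct]
    have h2 : (c • y) ⬝ᵥ LH *ᵥ (c • y) = c^2 * (y ⬝ᵥ LH *ᵥ y) := by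
      rw [Matrix.mulVec_smul, dotProduct_smul, smul_dotProduct]
      simp [smul_smul]
      ring
    have h3 : y ⬝ᵥ LH *ᵥ y ≤ (1 + ε) * (y ⬝ᵥ χ) := by
      have := (happrox y).2
      rwa [hyy] at this
    have hc2 : c^2 * (y ⬝ᵥ LH *ᵥ y) ≤ c^2 * ((1 + ε) * (y ⬝ᵥ χ)) := by
      apply mul_le_mul_of_nonneg_left h3 (sq_nonneg c)
    have hcc : c * (1 + ε) = 1 := by
      rw [hc]; field_simp [hε1''.ne']
    have : 2 * (c * (y ⬝ᵥ χ)) - c^2 * ((1 + ε) * (y ⬝ᵥ χ)) ≤ z ⬝ᵥ χ := by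
      rw [h1, h2] at hk
      linarith
    have heq : c^2 * ((1 + ε) * (y ⬝ᵥ χ)) = c * (y ⬝ᵥ χ) := by
      have hce : c^2 * (1 + ε) = c := by
        rw [sq, mul_assoc, hcc, mul_one]
      rw [← mul_assoc, hce]
    linarith
  -- upper bound: take x = (1-ε) • z in the variational lemma for LG
  have h2 : (1 - ε) * (z ⬝ᵥ χ) ≤ y ⬝ᵥ χ := by
    set c : ℝ := 1 - ε with hc
    have hk := key_var LG hLG y χ hy (c • z)
    have h1 : (c • z) ⬝ᵥ χ = c * (z ⬝ᵥ χ) := by simp [smul_dotProduct]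
    have h2' : (c • z) ⬝ᵥ LG *ᵥ (c • z) = c^2 * (z ⬝ᵥ LG *ᵥ z) := by
      rw [Matrix.mulVec_smul, dotProduct_smul, smul_dotProduct]
      simp [smul_smul]
      ring
    have h3 : (1 - ε) * (z ⬝ᵥ LG *ᵥ z) ≤ z ⬝ᵥ χ := by
      have := (happrox z).1
      rwa [hzz] at this
    have h3' : c^2 * (z ⬝ᵥ LG *ᵥ z) ≤ c * (z ⬝ᵥ χ) := by
      have := mul_le_mul_of_nonneg_left h3 (le_of_lt hε1')
      calc c^2 * (z ⬝ᵥ LG *ᵥ z) = (1 - ε) * ((1 - ε) * (z ⬝ᵥ LG *ᵥ z)) := by ring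
        _ ≤ (1 - ε) * (z ⬝ᵥ χ) := this
        _ = c * (z ⬝ᵥ χ) := by rw [hc]
    rw [h1, h2'] at hk
    linarith
  constructor
  · rw [← hdot y, ← hdot z]; linarith
  · rw [← hdot y, ← hdot z]
    rw [div_mul_eq_mul_div, le_div_iff₀ hε1']
    nlinarith
end
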